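/- Let σ(y) = 1/(1 + e^{−y}) and let 0 ≤ l < u and d ∈ [l, u]. Then for every y ∈ [l, u]: (i) σ(y) ≤ σ(d) + σ(d)(1 − σ(d))(y − d) (the tangent line at d is an upper bound), and (ii) σ(y) ≥ σ(l) + ((σ(u) − σ(l))/(u − l))(y − l) (the chord through the endpoints is a lower bound). -/

import Mathlib

/-- The sigmoid (logistic) function `σ(y) = 1 / (1 + exp (-y))`. -/
noncomputable def sigmoid (y : ℝ) : ℝ := 1 / (1 + Real.exp (-y))

lemma sigmoid_hasDerivAt (y : ℝ) :
    HasDerivAt sigmoid (sigmoid y * (1 - sigmoid y)) y := by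
  have hpos : 0 < 1 + Real.exp (-y) := by positivity
  have h1 : HasDerivAt (fun y : ℝ => 1 + Real.exp (-y)) (-Real.exp (-y)) y := by
    simpa using (Real.hasDerivAt_exp (-y)).comp y ((hasDerivAt_id y).neg) |>.const_add 1
  have h2 : HasDerivAt (fun y : ℝ => (1 + Real.exp (-y))⁻¹) _ y := h1.inv hpos.ne'
  have : sigmoid = fun y : ℝ => (1 + Real.exp (-y))⁻¹ := by
    funext z; simp [sigmoid, one_div]
  rw [this]
  convert h2 using 1
  have := hpos.ne'
  field_simp [sigmoid]
  ring

lemma sigmoid_pos (y : ℝ) : 0 < sigmoid y := by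
  have : 0 < 1 + Real.exp (-y) := by positivity
  exact div_pos one_pos this

lemma sigmoid_lt_one (y : ℝ) : sigmoid y < 1 := by
  have h : 0 < 1 + Real.exp (-y) := by positivity
  rw [sigmoid, div_lt_one h]
  linarith [Real.exp_pos (-y)]

lemma sigmoid_mono : Monotone sigmoid := by
  intro a b hab
  have ha : 0 < 1 + Real.exp (-a) := by positivity
  have hb : 0 < 1 + Real.exp (-b) := by positivity
  apply div_le_div_of_nonneg_left one_pos.le hb
  have := Real.exp_le_exp.2 (neg_le_neg hab)
  linarith

lemma half_le_sigmoid {y : ℝ} (hy : 0 ≤ y) : 1 / 2 ≤ sigmoid y := by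
  have h : Real.exp (-y) ≤ 1 := Real.exp_le_one_iff.2 (by linarith)
  have hb : 0 < 1 + Real.exp (-y) := by positivity
  rw [sigmoid, div_le_div_iff₀ (by norm_num) hb]
  linarith

lemma sigmoid_concaveOn : ConcaveOn ℝ (Set.Ici (0:ℝ)) sigmoid := by
  have hderiv : deriv sigmoid = fun y => sigmoid y * (1 - sigmoid y) := by
    funext y; exact (sigmoid_hasDerivAt y).deriv
  apply AntitoneOn.concaveOn_of_deriv (convex_Ici 0)
    (fun y _ => (sigmoid_hasDerivAt y).continuousAt.continuousWithinAt)
    (fun y _ => (sigmoid_hasDerivAt y).differentiableAt.differentiableWithinAt)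
  intro a ha b hb hab
  rw [interior_Ici] at ha hb
  rw [hderiv]
  have h1 : 1/2 ≤ sigmoid a := half_le_sigmoid ha.le
  have h2 : sigmoid a ≤ sigmoid b := sigmoid_mono hab
  have h3 : sigmoid b < 1 := sigmoid_lt_one b
  dsimp only
  nlinarith [mul_nonneg (sub_nonneg.2 h2) (by linarith : (0:ℝ) ≤ sigmoid a + sigmoid b - 1)]

/-- CROWN linear bounds for a sigmoid neuron whose pre-activation interval `[l, u]` lies in
`[0, ∞)`: the tangent line at any `d ∈ [l, u]` is an upper bound and the chord through the
endpoints is a lower bound. -/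
theorem sigmoid_crown_bounds_nonneg (l u d : ℝ) (hl : 0 ≤ l) (hlu : l < u)
    (hd : d ∈ Set.Icc l u) :
    ∀ y ∈ Set.Icc l u,
      sigmoid y ≤ sigmoid d + sigmoid d * (1 - sigmoid d) * (y - d) ∧
      sigmoid l + ((sigmoid u - sigmoid l) / (u - l)) * (y - l) ≤ sigmoid y := by
  intro y hy
  have hconc := sigmoid_concaveOn
  have hdS : d ∈ Set.Ici (0:ℝ) := le_trans hl hd.1
  have hlS : l ∈ Set.Ici (0:ℝ) := hl
  have huS : u ∈ Set.Ici (0:ℝ) := le_trans hl hlu.le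
  have hyS : y ∈ Set.Ici (0:ℝ) := le_trans hl hy.1
  constructor
  · -- tangent upper bound
    rcases lt_trichotomy y d with h | h | h
    · have := hconc.le_slope_of_hasDerivAt hyS hdS h (sigmoid_hasDerivAt d)
      rw [slope_def_field, le_div_iff₀ (by linarith : (0:ℝ) < d - y)] at this
      nlinarith
    · subst h; simp
    · have := hconc.slope_le_of_hasDerivAt hdS hyS h (sigmoid_hasDerivAt d)
      rw [slope_def_field, div_le_iff₀ (by linarith : (0:ℝ) < y - d)] at this
      nlinarith
  · -- chord lower bound
    have hul : 0 < u - l := by linarith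
    set a := (u - y) / (u - l) with ha
    set b := (y - l) / (u - l) with hb
    have ha0 : 0 ≤ a := div_nonneg (by linarith [hy.2]) hul.le
    have hb0 : 0 ≤ b := div_nonneg (by linarith [hy.1]) hul.le
    have hab : a + b = 1 := by rw [ha, hb]; field_simp; ring
    have hcomb : a • l + b • u = y := by
      simp only [smul_eq_mul, ha, hb]; field_simp; ring
    have := hconc.2 hlS huS ha0 hb0 hab
    rw [hcomb] at this
    have hgoal : sigmoid l + ((sigmoid u - sigmoid l) / (u - l)) * (y - l)
        = a • sigmoid l + b • sigmoid u := by
      simp only [smul_eq_mul, ha, hb]; field_simp; ring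
    rw [hgoal]
    exact this
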